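/- Fix p ∈ (0,1), η > 0, ν ∈ ℝ, δ > 0, τ > 0, and let (A, ζ) with A > 0 be a nontrivial equilibrium, i.e., g₁(A,ζ) = g₂(A,ζ) = 0. Then the Jacobian matrix J of (g₁, g₂) at (A, ζ) satisfies trace J = 2δ − 1/τ and det J = (p²ηA²/(8τ))(2pA² − 1). -/

import Mathlib

open Matrix

/-- Slow-flow amplitude dynamics for a general network with a single nonlinear node
(small linear damping). -/
noncomputable def g₁ (p ν η A ζ : ℝ) : ℝ :=
  (1 / 2) * ((p * ν - ζ) * A + (p ^ 2 * η / 4) * A ^ 3 - (p ^ 3 * η / 8) * A ^ 5)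

/-- Proposed autonomous damping dynamics for a general network. -/
noncomputable def g₂ (p ν η δ τ A ζ : ℝ) : ℝ :=
  τ⁻¹ * (-ζ + δ + p * ν + (p ^ 2 * η / 8) * A ^ 2)

/-- Jacobian matrix of the planar vector field `(g₁, g₂)` with respect to `(A, ζ)`. -/
noncomputable def Jg (p ν η δ τ A ζ : ℝ) : Matrix (Fin 2) (Fin 2) ℝ :=
  !![deriv (fun a => g₁ p ν η a ζ) A, deriv (fun z => g₁ p ν η A z) ζ;
     deriv (fun a => g₂ p ν η δ τ a ζ) A, deriv (fun z => g₂ p ν η δ τ A z) ζ]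

/-- At any nontrivial equilibrium, the Jacobian satisfies
`trace J = 2δ − 1/τ` and `det J = (p²ηA²/(8τ))(2pA² − 1)`. -/
theorem stmt_12 (p η ν δ τ A ζ : ℝ) (hp : p ∈ Set.Ioo (0 : ℝ) 1) (hη : 0 < η)
    (hδ : 0 < δ) (hτ : 0 < τ) (hA : 0 < A)
    (h1 : g₁ p ν η A ζ = 0) (h2 : g₂ p ν η δ τ A ζ = 0) :
    (Jg p ν η δ τ A ζ).trace = 2 * δ - 1 / τ ∧
    (Jg p ν η δ τ A ζ).det = (p ^ 2 * η * A ^ 2 / (8 * τ)) * (2 * p * A ^ 2 - 1) := by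
  have hA0 : A ≠ 0 := hA.ne'
  have hτ0 : τ ≠ 0 := hτ.ne'
  -- equilibrium equations
  have E1 : (p * ν - ζ) + (p ^ 2 * η / 4) * A ^ 2 - (p ^ 3 * η / 8) * A ^ 4 = 0 := by
    have h1' : A * ((p * ν - ζ) + (p ^ 2 * η / 4) * A ^ 2 - (p ^ 3 * η / 8) * A ^ 4) = 0 := by
      unfold g₁ at h1; linear_combination 2 * h1
    exact (mul_eq_zero.mp h1').resolve_left hA0
  have E2 : -ζ + δ + p * ν + (p ^ 2 * η / 8) * A ^ 2 = 0 := by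
    have h2' : τ⁻¹ * (-ζ + δ + p * ν + (p ^ 2 * η / 8) * A ^ 2) = 0 := h2
    exact (mul_eq_zero.mp h2').resolve_left (inv_ne_zero hτ0)
  -- derivatives
  have d11 : deriv (fun a => g₁ p ν η a ζ) A
      = (1 / 2) * ((p * ν - ζ) + (p ^ 2 * η / 4) * (3 * A ^ 2) - (p ^ 3 * η / 8) * (5 * A ^ 4)) := by
    have h : HasDerivAt (fun a : ℝ => g₁ p ν η a ζ)
        ((1 / 2) * ((p * ν - ζ) + (p ^ 2 * η / 4) * (3 * A ^ 2) - (p ^ 3 * η / 8) * (5 * A ^ 4))) A := by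
      unfold g₁
      have h' := ((((hasDerivAt_id A).const_mul (p * ν - ζ)).add
          ((hasDerivAt_pow 3 A).const_mul (p ^ 2 * η / 4))).sub
          ((hasDerivAt_pow 5 A).const_mul (p ^ 3 * η / 8))).const_mul (1 / 2)
      convert h' using 1
      · rfl
      · rfl
      · funext a; simp only [Pi.add_apply, Pi.sub_apply, id]
      push_cast; ring
    exact h.deriv
  have d12 : deriv (fun z => g₁ p ν η A z) ζ = -(A / 2) := by
    have h : HasDerivAt (fun z : ℝ => g₁ p ν η A z) (-(A / 2)) ζ := by
      unfold g₁
      have h' := ((((hasDerivAt_id ζ).const_sub (p * ν)).mul_const A).add_const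
          ((p ^ 2 * η / 4) * A ^ 3 - (p ^ 3 * η / 8) * A ^ 5)).const_mul (1 / 2)
      convert h' using 1
      · rfl
      · rfl
      · funext z; simp only [id]; ring
      · ring
    exact h.deriv
  have d21 : deriv (fun a => g₂ p ν η δ τ a ζ) A = τ⁻¹ * ((p ^ 2 * η / 8) * (2 * A)) := by
    have h : HasDerivAt (fun a : ℝ => g₂ p ν η δ τ a ζ) (τ⁻¹ * ((p ^ 2 * η / 8) * (2 * A))) A := by
      unfold g₂
      have h' := (((hasDerivAt_pow 2 A).const_mul (p ^ 2 * η / 8)).const_add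
          (-ζ + δ + p * ν)).const_mul τ⁻¹
      convert h' using 1
      · rfl
      · rfl
      push_cast; ring
    exact h.deriv
  have d22 : deriv (fun z => g₂ p ν η δ τ A z) ζ = -τ⁻¹ := by
    have h : HasDerivAt (fun z : ℝ => g₂ p ν η δ τ A z) (-τ⁻¹) ζ := by
      unfold g₂
      have h' := (((hasDerivAt_id ζ).neg.add_const
          (δ + p * ν + (p ^ 2 * η / 8) * A ^ 2)).const_mul τ⁻¹)
      convert h' using 1
      · rfl
      · rfl
      · funext z; simp only [Pi.neg_apply, id]; ring
      · ring
    exact h.deriv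
  constructor
  · rw [Jg, Matrix.trace_fin_two_of, d11, d22]
    linear_combination (5 / 2) * E1 - 2 * E2
  · rw [Jg, Matrix.det_fin_two_of, d11, d12, d21, d22]
    linear_combination (-(τ⁻¹ / 2)) * E1
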